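/- Let ℓ = 1 (i.e., q = ±1, q² = 1) and consider the U(sl₂)-type action on (ℂ²)^{⊗N} given by f|x₁…x_N⟩_z = ∑_{j: x_j = +} q^{j-1}|x₁…x_{j-1}(−)x_{j+1}…x_N⟩_z. If d ∈ ℤ has the parity of N and q^d = z², setting z_m = z q^m, the map X_{N;d+2m,z_m}^+ → X_{N;d+2(m-1),z_{m-1}}^+, |x₁…x_N⟩_{z_m} ↦ f|x₁…x_N⟩_{z_{m-1}}, commutes with e₁ and with the twisted translation Ω_N, i.e., is aTL_N-linear. -/

import Mathlib

/-- The spin value of a site: `+1` for up, `-1` for down. -/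
def sgn (b : Bool) : ℤ := if b then 1 else -1

/-- The Temperley-Lieb generator `e₁` with parameter `q`. -/
noncomputable def e1op (N : ℕ) (p : ℂ) (v : (ZMod N → Bool) → ℂ) : (ZMod N → Bool) → ℂ :=
  fun y => if y 0 ≠ y 1 then
      v (fun j => if j = 0 then y 1 else if j = 1 then y 0 else y j) - p ^ sgn (y 0) * v y
    else 0

/-- The twisted translation `Ω_N = t z^{-σ₁^z}`. -/
noncomputable def OmegaOp (N : ℕ) (z : ℂ) (v : (ZMod N → Bool) → ℂ) :
    (ZMod N → Bool) → ℂ :=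
  fun y => z ^ (-sgn (y (-1))) * v fun j => y (j - 1)

/-- The `U(sl₂)` lowering operator through the signed coproduct:
`f|x₁…x_N⟩ = ∑_{j : x_j = +} q^{j-1}|x₁…x_{j-1}(−)x_{j+1}…x_N⟩`. -/
noncomputable def lowerF (N : ℕ) [NeZero N] (q : ℂ) (v : (ZMod N → Bool) → ℂ) :
    (ZMod N → Bool) → ℂ :=
  fun y => ∑ j : ZMod N, if y j = false then q ^ j.val * v (Function.update y j true) else 0

namespace ATLaux

lemma zpow_period {q : ℂ} (hq2 : q ^ 2 = 1) (a b : ℤ) (h : a % 2 = b % 2) :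
    q ^ a = q ^ b := by
  have hq0 : q ≠ 0 := by
    intro h0; rw [h0] at hq2; norm_num at hq2
  obtain ⟨k, hk⟩ : 2 ∣ (a - b) := by omega
  have ha : a = b + 2 * k := by omega
  rw [ha, zpow_add₀ hq0, zpow_mul, show ((2:ℤ)) = ((2:ℕ):ℤ) from rfl, zpow_natCast, hq2,
    one_zpow, mul_one]

variable {N : ℕ} [NeZero N]

lemma sum_split01 (hN : 2 ≤ N) (f : ZMod N → ℂ) :
    ∑ j : ZMod N, f j
      = f 0 + f 1 + ∑ j ∈ (Finset.univ.erase 0).erase 1, f j := by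
  haveI : Fact (1 < N) := ⟨hN⟩
  have h10 : (1 : ZMod N) ∈ Finset.univ.erase (0 : ZMod N) := by
    simp [Finset.mem_erase]
  rw [← Finset.add_sum_erase _ f (Finset.mem_univ (0 : ZMod N)),
    ← Finset.add_sum_erase _ f h10]
  ring

omit [NeZero N] in
lemma swap_lemma1 (hN : 2 ≤ N) (y : ZMod N → Bool) (h : y 0 = y 1) :
    (fun j : ZMod N => if j = 0 then (Function.update y 0 true) 1
      else if j = 1 then (Function.update y 0 true) 0 else (Function.update y 0 true) j)
    = Function.update y 1 true := by
  haveI : Fact (1 < N) := ⟨hN⟩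
  have h01 : (0 : ZMod N) ≠ 1 := zero_ne_one
  funext k
  by_cases hk0 : k = 0 <;> by_cases hk1 : k = 1 <;>
    simp_all [Function.update_apply]

omit [NeZero N] in
lemma swap_lemma2 (hN : 2 ≤ N) (y : ZMod N → Bool) (h : y 0 = y 1) :
    (fun j : ZMod N => if j = 0 then (Function.update y 1 true) 1
      else if j = 1 then (Function.update y 1 true) 0 else (Function.update y 1 true) j)
    = Function.update y 0 true := by
  haveI : Fact (1 < N) := ⟨hN⟩
  have h01 : (0 : ZMod N) ≠ 1 := zero_ne_one
  funext k
  by_cases hk0 : k = 0 <;> by_cases hk1 : k = 1 <;>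
    simp_all [Function.update_apply]

omit [NeZero N] in
lemma swap_lemma3 (hN : 2 ≤ N) (y : ZMod N → Bool) (h : y 0 = true) :
    Function.update (fun j : ZMod N => if j = 0 then y 1 else if j = 1 then y 0 else y j) 0 true
    = Function.update y 1 true := by
  haveI : Fact (1 < N) := ⟨hN⟩
  have h01 : (0 : ZMod N) ≠ 1 := zero_ne_one
  funext k
  by_cases hk0 : k = 0 <;> by_cases hk1 : k = 1 <;>
    simp_all [Function.update_apply]

omit [NeZero N] in
lemma swap_lemma4 (hN : 2 ≤ N) (y : ZMod N → Bool) (h : y 1 = true) :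
    Function.update (fun j : ZMod N => if j = 0 then y 1 else if j = 1 then y 0 else y j) 1 true
    = Function.update y 0 true := by
  haveI : Fact (1 < N) := ⟨hN⟩
  have h01 : (0 : ZMod N) ≠ 1 := zero_ne_one
  funext k
  by_cases hk0 : k = 0 <;> by_cases hk1 : k = 1 <;>
    simp_all [Function.update_apply]

omit [NeZero N] in
lemma swap_update (y : ZMod N → Bool) (j : ZMod N) (hj0 : j ≠ 0) (hj1 : j ≠ 1) :
    (fun k : ZMod N => if k = 0 then (Function.update y j true) 1
      else if k = 1 then (Function.update y j true) 0 else (Function.update y j true) k)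
    = Function.update (fun k : ZMod N => if k = 0 then y 1 else if k = 1 then y 0 else y k)
        j true := by
  have h0j : ¬((0 : ZMod N) = j) := fun h => hj0 h.symm
  have h1j : ¬((1 : ZMod N) = j) := fun h => hj1 h.symm
  funext k
  simp only [Function.update_apply]
  by_cases hk0 : k = 0 <;> by_cases hk1 : k = 1 <;> by_cases hkj : k = j <;> simp_all

lemma e1_comm (hN : 2 ≤ N) (q : ℂ) (hq : q = 1 ∨ q = -1) :
    ∀ v, e1op N q (lowerF N q v) = lowerF N q (e1op N q v) := by
  haveI : Fact (1 < N) := ⟨hN⟩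
  have hq2 : q * q = 1 := by rcases hq with h | h <;> rw [h] <;> norm_num
  have hq0 : q ≠ 0 := by intro h0; rw [h0] at hq2; norm_num at hq2
  have hqs : ∀ b : Bool, q ^ sgn b = q := by
    intro b; rcases hq with h | h <;> cases b <;> rw [h] <;> norm_num [sgn]
  have h01 : (0 : ZMod N) ≠ 1 := zero_ne_one
  have hv1 : (1 : ZMod N).val = 1 := ZMod.val_one N
  intro v
  funext y
  have e1apply : ∀ (w : (ZMod N → Bool) → ℂ) (x : ZMod N → Bool), e1op N q w x
      = if x 0 ≠ x 1 then
          w (fun j => if j = 0 then x 1 else if j = 1 then x 0 else x j)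
            - q ^ sgn (x 0) * w x
        else 0 := fun _ _ => rfl
  have lFapply : ∀ (x : ZMod N → Bool), lowerF N q v x
      = ∑ j : ZMod N, if x j = false then q ^ j.val * v (Function.update x j true) else 0 :=
    fun _ => rfl
  set s := (Finset.univ.erase (0 : ZMod N)).erase 1 with hs
  -- rest-term identity when y 0 ≠ y 1
  have hrest : y 0 ≠ y 1 → ∀ j ∈ s,
      (if y j = false then q ^ j.val * e1op N q v (Function.update y j true) else 0)
      = (if (fun k : ZMod N => if k = 0 then y 1 else if k = 1 then y 0 else y k) j = false
            then q ^ j.val * v (Function.update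
              (fun k : ZMod N => if k = 0 then y 1 else if k = 1 then y 0 else y k) j true)
            else 0)
        - q * (if y j = false then q ^ j.val * v (Function.update y j true) else 0) := by
    intro hne j hj
    obtain ⟨hj1, hj0mem⟩ := Finset.mem_erase.mp hj
    obtain ⟨hj0, -⟩ := Finset.mem_erase.mp hj0mem
    have hσyj : (fun k : ZMod N => if k = 0 then y 1 else if k = 1 then y 0 else y k) j
        = y j := by simp [hj0, hj1]
    rw [hσyj]
    by_cases hyj : y j = false
    · rw [if_pos hyj, if_pos hyj, if_pos hyj]
      rw [e1apply]
      have hc : (Function.update y j true) 0 ≠ (Function.update y j true) 1 := by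
        rwa [Function.update_of_ne (Ne.symm hj0), Function.update_of_ne (Ne.symm hj1)]
      rw [if_pos hc, swap_update y j hj0 hj1, Function.update_of_ne (Ne.symm hj0), hqs]
      ring
    · rw [if_neg hyj, if_neg hyj, if_neg hyj]; ring
  show e1op N q (lowerF N q v) y = ∑ j : ZMod N,
    if y j = false then q ^ j.val * e1op N q v (Function.update y j true) else 0
  rw [e1apply]
  rcases Bool.eq_false_or_eq_true (y 0) with h0 | h0 <;>
    rcases Bool.eq_false_or_eq_true (y 1) with h1 | h1
  -- y0 = false, y1 = false
  · rw [if_neg (by simp [h0, h1])]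
    rw [sum_split01 hN]
    have trest : ∑ j ∈ s,
        (if y j = false then q ^ j.val * e1op N q v (Function.update y j true) else 0) = 0 := by
      refine Finset.sum_eq_zero fun j hj => ?_
      obtain ⟨hj1, hj0mem⟩ := Finset.mem_erase.mp hj
      obtain ⟨hj0, -⟩ := Finset.mem_erase.mp hj0mem
      have hzz : e1op N q v (Function.update y j true) = 0 := by
        rw [e1apply, if_neg]
        rw [Function.update_of_ne (Ne.symm hj0), Function.update_of_ne (Ne.symm hj1), h0, h1]
        simp
      rw [hzz, mul_zero, ite_self]
    rw [trest, h0, h1]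
    norm_num

  · rw [if_pos (by rw [h0, h1]; simp), hqs, lFapply, lFapply,
      sum_split01 hN, sum_split01 hN, sum_split01 hN,
      Finset.sum_congr rfl (hrest (by rw [h0, h1]; simp)), Finset.sum_sub_distrib,
      ← Finset.mul_sum]
    have c1 : e1op N q v (Function.update y 1 true) = 0 := by
      rw [e1apply, if_neg]
      rw [Function.update_self, Function.update_of_ne h01, h0]
      simp
    have hA0 : Function.update
        (fun j : ZMod N => if j = 0 then y 1 else if j = 1 then y 0 else y j) 0 true
        = Function.update y 1 true := swap_lemma3 hN y h0
    set w : ZMod N → Bool := fun j => if j = 0 then y 1 else if j = 1 then y 0 else y j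
      with hw
    have hw0 : w 0 = y 1 := by rw [hw]; simp
    have hw1 : w 1 = y 0 := by rw [hw]; simp [h01.symm]
    have eA0 : (if w 0 = false then q ^ (0:ZMod N).val * v (Function.update w 0 true) else 0)
        = v (Function.update y 1 true) := by
      rw [hw0, h1, hA0, ZMod.val_zero, pow_zero, one_mul, if_pos rfl]
    have eA1 : (if w 1 = false then q ^ (1:ZMod N).val * v (Function.update w 1 true) else 0)
        = 0 := by rw [hw1, h0]; simp
    have eB0 : (if y 0 = false then q ^ (0:ZMod N).val * v (Function.update y 0 true) else 0)
        = 0 := by rw [h0]; simp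
    have eB1 : (if y 1 = false then q ^ (1:ZMod N).val * v (Function.update y 1 true) else 0)
        = q * v (Function.update y 1 true) := by rw [h1, hv1, pow_one, if_pos rfl]
    have eC0 : (if y 0 = false then
          q ^ (0:ZMod N).val * e1op N q v (Function.update y 0 true) else 0)
        = 0 := by rw [h0]; simp
    have eC1 : (if y 1 = false then
          q ^ (1:ZMod N).val * e1op N q v (Function.update y 1 true) else 0)
        = 0 := by rw [h1, c1, mul_zero, ite_self]
    rw [eA0, eA1, eB0, eB1, eC0, eC1]
    linear_combination (-(v (Function.update y 1 true))) * hq2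
  -- y0 = true, y1 = true
  · rw [if_pos (by rw [h0, h1]; simp), hqs, lFapply, lFapply,
      sum_split01 hN, sum_split01 hN, sum_split01 hN,
      Finset.sum_congr rfl (hrest (by rw [h0, h1]; simp)), Finset.sum_sub_distrib,
      ← Finset.mul_sum]
    have c0 : e1op N q v (Function.update y 0 true) = 0 := by
      rw [e1apply, if_neg]
      rw [Function.update_self, Function.update_of_ne (Ne.symm h01), h1]
      simp
    have hA1 : Function.update
        (fun j : ZMod N => if j = 0 then y 1 else if j = 1 then y 0 else y j) 1 true
        = Function.update y 0 true := swap_lemma4 hN y h1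
    set w : ZMod N → Bool := fun j => if j = 0 then y 1 else if j = 1 then y 0 else y j
      with hw
    have hw0 : w 0 = y 1 := by rw [hw]; simp
    have hw1 : w 1 = y 0 := by rw [hw]; simp [h01.symm]
    have eA0 : (if w 0 = false then q ^ (0:ZMod N).val * v (Function.update w 0 true) else 0)
        = 0 := by rw [hw0, h1]; simp
    have eA1 : (if w 1 = false then q ^ (1:ZMod N).val * v (Function.update w 1 true) else 0)
        = q * v (Function.update y 0 true) := by
      rw [hw1, h0, hA1, hv1, pow_one, if_pos rfl]
    have eB0 : (if y 0 = false then q ^ (0:ZMod N).val * v (Function.update y 0 true) else 0)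
        = v (Function.update y 0 true) := by
      rw [h0, ZMod.val_zero, pow_zero, one_mul, if_pos rfl]
    have eB1 : (if y 1 = false then q ^ (1:ZMod N).val * v (Function.update y 1 true) else 0)
        = 0 := by rw [h1]; simp
    have eC0 : (if y 0 = false then
          q ^ (0:ZMod N).val * e1op N q v (Function.update y 0 true) else 0)
        = 0 := by rw [h0, c0, mul_zero, ite_self]
    have eC1 : (if y 1 = false then
          q ^ (1:ZMod N).val * e1op N q v (Function.update y 1 true) else 0)
        = 0 := by rw [h1]; simp
    rw [eA0, eA1, eB0, eB1, eC0, eC1]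
    ring
  -- y0 = true, y1 = false
  · rw [if_neg (by simp [h0, h1])]
    rw [sum_split01 hN]
    have u0 : Function.update y 0 true 0 = true := by simp
    have u01 : Function.update y 0 true 1 = y 1 := Function.update_of_ne (Ne.symm h01) _ _
    have u1 : Function.update y 1 true 1 = true := by simp
    have u10 : Function.update y 1 true 0 = y 0 := Function.update_of_ne h01 _ _
    have t0 : e1op N q v (Function.update y 0 true)
        = v (Function.update y 1 true) - q * v (Function.update y 0 true) := by
      rw [e1apply, if_pos (by rw [u0, u01, h1]; simp),
        swap_lemma1 hN y (by rw [h0, h1]), u0, hqs]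
    have t1 : e1op N q v (Function.update y 1 true)
        = v (Function.update y 0 true) - q * v (Function.update y 1 true) := by
      rw [e1apply, if_pos (by rw [u1, u10, h0]; simp),
        swap_lemma2 hN y (by rw [h0, h1]), u10, h0, hqs]
    have trest : ∑ j ∈ s,
        (if y j = false then q ^ j.val * e1op N q v (Function.update y j true) else 0) = 0 := by
      refine Finset.sum_eq_zero fun j hj => ?_
      obtain ⟨hj1, hj0mem⟩ := Finset.mem_erase.mp hj
      obtain ⟨hj0, -⟩ := Finset.mem_erase.mp hj0mem
      have hzz : e1op N q v (Function.update y j true) = 0 := by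
        rw [e1apply, if_neg]
        rw [Function.update_of_ne (Ne.symm hj0), Function.update_of_ne (Ne.symm hj1), h0, h1]
        simp
      rw [hzz, mul_zero, ite_self]
    rw [trest, h0, h1, if_pos rfl, if_pos rfl, ZMod.val_zero, hv1, pow_zero, pow_one,
      t0, t1]
    linear_combination (v (Function.update y 1 true)) * hq2
  -- y0 = false, y1 = true
end ATLaux

/-- For `ℓ = 1` (i.e. `q = ±1`), `d ∈ ℤ` of the parity of `N` with `q^d = z²`, and
`z_m = z q^m`, the map `|x₁…x_N⟩_{z_m} ↦ f|x₁…x_N⟩_{z_{m-1}}` from `X_{N;d+2m,z_m}^+` to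
`X_{N;d+2(m-1),z_{m-1}}^+` commutes with `e₁` and with the twisted translations, i.e. it is
`aTL_N`-linear. -/
theorem lowering_is_atl_linear (N : ℕ) [NeZero N] (hN : 2 ≤ N) (q z : ℂ)
    (hq : q = 1 ∨ q = -1) (hz : z ≠ 0) (d m : ℤ)
    (hpar : d % 2 = (N : ℤ) % 2) (hdz : q ^ d = z ^ 2) :
    (∀ v, e1op N q (lowerF N q v) = lowerF N q (e1op N q v)) ∧
    (∀ v, OmegaOp N (z * q ^ (m - 1)) (lowerF N q v) =
      lowerF N q (OmegaOp N (z * q ^ m) v)) := by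
  haveI : Fact (1 < N) := ⟨hN⟩
  have hq2 : q ^ 2 = 1 := by rcases hq with h | h <;> rw [h] <;> norm_num
  have hq0 : q ≠ 0 := by intro h0; rw [h0] at hq2; norm_num at hq2
  have hqinv : q⁻¹ = q := by
    rcases hq with h | h <;> rw [h] <;> norm_num
  constructor
  · exact ATLaux.e1_comm hN q hq
  intro v
  funext y
  show (z * q ^ (m-1)) ^ (-sgn (y (-1))) *
      (∑ j : ZMod N, if (fun k => y (k - 1)) j = false then
        q ^ j.val * v (Function.update (fun k => y (k-1)) j true) else 0)
    = ∑ j : ZMod N, if y j = false then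
        q ^ j.val * ((z * q ^ m) ^ (-sgn ((Function.update y j true) (-1))) *
          v fun k => (Function.update y j true) (k - 1)) else 0
  rw [show (∑ j : ZMod N, if (fun k => y (k - 1)) j = false then
        q ^ j.val * v (Function.update (fun k => y (k-1)) j true) else 0)
      = ∑ k : ZMod N, if y k = false then
        q ^ (k+1).val * v (Function.update (fun j => y (j-1)) (k+1) true) else 0 from
    (Fintype.sum_equiv (Equiv.addRight (1 : ZMod N))
      (fun k => if y k = false then
        q ^ (k+1).val * v (Function.update (fun j => y (j-1)) (k+1) true) else 0)
      _ (fun k => by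
      simp only [Equiv.coe_addRight]
      simp only [add_sub_cancel_right])).symm]
  rw [Finset.mul_sum]
  refine Finset.sum_congr rfl (fun k _ => ?_)
  by_cases hk : y k = false
  · simp only [hk, if_true, reduceIte]
    have hupd : Function.update (fun j => y (j-1)) (k+1) true
        = fun j => (Function.update y k true) (j - 1) := by
      funext j
      simp only [Function.update_apply]
      by_cases hj : j = k + 1
      · have : j - 1 = k := by rw [hj]; ring
        simp [hj, this]
      · have : j - 1 ≠ k := by
          intro h; apply hj; rw [← h]; ring
        simp [hj, this]
    rw [hupd]
    by_cases hkk : k = -1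
    · subst hkk
      have hnv : ((-1 : ZMod N)).val = N - 1 := by
        obtain ⟨n, rfl⟩ := Nat.exists_eq_succ_of_ne_zero (NeZero.ne N)
        simp [ZMod.val_neg_one n]
      have e1 : (-sgn (y (-1))) = 1 := by simp [sgn, hk]
      have e2 : (-sgn (Function.update y (-1) true (-1))) = -1 := by simp [sgn]
      rw [e1, e2, zpow_one, zpow_neg_one, neg_add_cancel, ZMod.val_zero, pow_zero, one_mul,
        hnv]
      have hzm : z * q ^ m ≠ 0 := mul_ne_zero hz (zpow_ne_zero _ hq0)
      have key : z * q ^ (m-1) * (z * q ^ m) = q ^ ((N:ℤ) - 1) := by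
        have h1 : z * q ^ (m-1) * (z * q ^ m) = z ^ 2 * (q ^ (m-1) * q ^ m) := by ring
        rw [h1, ← zpow_add₀ hq0, ← hdz, ← zpow_add₀ hq0]
        exact ATLaux.zpow_period hq2 _ _ (by omega)
      have keyn : z * q ^ (m-1) * (z * q ^ m) = q ^ (N - 1) := by
        rw [key, show ((N:ℤ) - 1) = ((N - 1 : ℕ) : ℤ) by
          push_cast [Nat.cast_sub (by omega : 1 ≤ N)]; ring, zpow_natCast]
      have key2 : q ^ (N-1) * (z * q ^ m)⁻¹ = z * q ^ (m-1) := by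
        rw [mul_inv_eq_iff_eq_mul₀ hzm, ← keyn]
      rw [← mul_assoc, key2]
    · have hne : (-1 : ZMod N) ≠ k := fun h => hkk h.symm
      simp only [Function.update_of_ne hne]
      have hval : (k + 1).val = k.val + 1 := by
        have hlt : k.val + 1 < N := by
          have h1 : k.val < N := ZMod.val_lt k
          rcases Nat.lt_or_ge (k.val + 1) N with h | h
          · exact h
          · exfalso; apply hkk
            have hv : k.val = N - 1 := by omega
            have h2 : ((k.val : ZMod N)) = ((N - 1 : ℕ) : ZMod N) := by rw [hv]
            rw [ZMod.natCast_val, ZMod.cast_id] at h2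
            rw [h2, Nat.cast_sub (by omega), ZMod.natCast_self]
            simp
        rw [ZMod.val_add_of_lt (by rw [ZMod.val_one]; exact hlt), ZMod.val_one]
      rw [hval, pow_succ]
      have hqm : z * q ^ m = (z * q ^ (m-1)) * q := by
        rw [mul_assoc, ← zpow_add_one₀ hq0]; ring_nf
      rw [hqm]
      cases hb : y (-1)
      · have e1 : (-sgn false) = 1 := by simp [sgn]
        rw [e1, zpow_one, zpow_one]; ring
      · have e1 : (-sgn true) = -1 := by simp [sgn]
        rw [e1, zpow_neg_one, zpow_neg_one, mul_inv (z * q ^ (m-1)) q, hqinv]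
        ring
  · simp [hk]
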